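/- Let n ≥ 1, m > 0, c_1 ≥ 1, and let q̂_{ij} ∈ (0,1] for all i, j ∈ [n]. Let N ∈ ℝ^{n×n} and let u ∈ ℝ^n be a unit vector satisfying u_i² ≤ (4n·c_1²/m)·q̂_{ij} for all i, j. Let (δ_{ij})_{i,j∈[n]} be independent {0,1}-valued random variables with P(δ_{ij}=1) = q̂_{ij}, and let R be the random matrix with R_{ij} = δ_{ij}·N_{ij}/q̂_{ij}. Then for every δ > 0: P( ‖u^T R − u^T N‖ > δ·‖N‖_F ) ≤ 4n·c_1²/(m·δ²), where the norm of a row vector is the Euclidean norm. -/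

import Mathlib

open Matrix MeasureTheory ProbabilityTheory

/-- Frobenius norm of a real matrix. -/
noncomputable def frobNorm {n₁ n₂ : ℕ} (A : Matrix (Fin n₁) (Fin n₂) ℝ) : ℝ :=
  Real.sqrt (∑ i, ∑ j, (A i j) ^ 2)

theorem stmt9 {n : ℕ} (hn : 1 ≤ n) (m c1 : ℝ) (hm : 0 < m) (hc1 : 1 ≤ c1)
    (qhat : Fin n → Fin n → ℝ) (hq : ∀ i j, qhat i j ∈ Set.Ioc (0 : ℝ) 1)
    (N : Matrix (Fin n) (Fin n) ℝ)
    (u : Fin n → ℝ) (hu : ∑ i, (u i) ^ 2 = 1)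
    (hub : ∀ i j, (u i) ^ 2 ≤ (4 * n * c1 ^ 2 / m) * qhat i j)
    {Ω : Type*} [MeasureSpace Ω] [IsProbabilityMeasure (ℙ : Measure Ω)]
    (X : Fin n × Fin n → Ω → ℝ)
    (hmeas : ∀ p, Measurable (X p))
    (hval : ∀ p ω, X p ω = 0 ∨ X p ω = 1)
    (hind : iIndepFun X ℙ)
    (hX : ∀ p, ℙ {ω | X p ω = 1} = ENNReal.ofReal (qhat p.1 p.2))
    (δ : ℝ) (hδ : 0 < δ) :
    ℙ {ω | δ * frobNorm N <
        Real.sqrt (∑ j, ((∑ i, u i * (X (i, j) ω * N i j / qhat i j))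
          - ∑ i, u i * N i j) ^ 2)} ≤
      ENNReal.ofReal (4 * n * c1 ^ 2 / (m * δ ^ 2)) := by
  classical
  have hq0 : ∀ i j, 0 < qhat i j := fun i j => (hq i j).1
  have hq1 : ∀ i j, qhat i j ≤ 1 := fun i j => (hq i j).2
  set K : ℝ := 4 * n * c1 ^ 2 / m with hKdef
  have hn0 : (0:ℝ) < n := by exact_mod_cast hn
  have hKpos : 0 < K := by positivity
  set q : Fin n × Fin n → ℝ := fun p => qhat p.1 p.2 with hqdef
  -- boundedness / integrability of the X's
  have hXbd : ∀ p ω, ‖X p ω‖ ≤ 1 := by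
    intro p ω; rcases hval p ω with h | h <;> simp [h]
  have hXint : ∀ p, Integrable (X p) ℙ := by
    intro p
    exact ⟨(hmeas p).aestronglyMeasurable,
      HasFiniteIntegral.of_bounded (C := 1) (ae_of_all _ (hXbd p))⟩
  have hXXint : ∀ p p', Integrable (fun ω => X p ω * X p' ω) ℙ := by
    intro p p'
    refine ⟨((hmeas p).mul (hmeas p')).aestronglyMeasurable,
      HasFiniteIntegral.of_bounded (C := 1) (ae_of_all _ fun ω => ?_)⟩
    calc ‖X p ω * X p' ω‖ = ‖X p ω‖ * ‖X p' ω‖ := norm_mul _ _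
    _ ≤ 1 * 1 := mul_le_mul (hXbd p ω) (hXbd p' ω) (norm_nonneg _) zero_le_one
    _ = 1 := one_mul 1
  -- expectation of X p
  have hEX : ∀ p, ∫ ω, X p ω = q p := by
    intro p
    have hXeq : (fun ω => X p ω) =
        Set.indicator {ω | X p ω = 1} (fun _ => (1:ℝ)) := by
      funext ω
      rcases hval p ω with h | h <;> simp [Set.indicator, h]
    have hms : MeasurableSet {ω | X p ω = 1} := by
      have : {ω | X p ω = 1} = X p ⁻¹' {1} := rfl
      rw [this]; exact hmeas p (measurableSet_singleton 1)
    rw [hXeq, integral_indicator_const (1:ℝ) hms, measureReal_def, hX p,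
      ENNReal.toReal_ofReal (hq0 p.1 p.2).le, smul_eq_mul, mul_one]
  have hEXXself : ∀ p, ∫ ω, X p ω * X p ω = q p := by
    intro p
    have : (fun ω => X p ω * X p ω) = fun ω => X p ω := by
      funext ω; rcases hval p ω with h | h <;> simp [h]
    rw [this]; exact hEX p
  have hEXX : ∀ p p', p ≠ p' → ∫ ω, X p ω * X p' ω = q p * q p' := by
    intro p p' hpp'
    have h := (hind.indepFun hpp').integral_mul_eq_mul_integral
      (hmeas p).aestronglyMeasurable (hmeas p').aestronglyMeasurable
    have h2 : ∫ ω, X p ω * X p' ω = (∫ ω, X p ω) * ∫ ω, X p' ω := h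
    rw [h2, hEX p, hEX p']
  -- centered variables
  set Y : Fin n × Fin n → Ω → ℝ := fun p ω => X p ω - q p with hYdef
  have hYmeas : ∀ p, Measurable (Y p) := fun p => (hmeas p).sub measurable_const
  have hYYeq : ∀ p p', (fun ω => Y p ω * Y p' ω) =
      fun ω => X p ω * X p' ω - q p * X p' ω - q p' * X p ω + q p * q p' := by
    intro p p'; funext ω; simp only [hYdef]; ring
  have hYYint : ∀ p p', Integrable (fun ω => Y p ω * Y p' ω) ℙ := by
    intro p p'
    rw [hYYeq p p']
    exact (((hXXint p p').sub ((hXint p').const_mul _)).sub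
      ((hXint p).const_mul _)).add (integrable_const _)
  have hEYY : ∀ p p', ∫ ω, Y p ω * Y p' ω =
      if p = p' then q p * (1 - q p) else 0 := by
    intro p p'
    rw [hYYeq p p']
    have i1 : Integrable (fun ω => q p * X p' ω) ℙ := (hXint p').const_mul _
    have i2 : Integrable (fun ω => q p' * X p ω) ℙ := (hXint p).const_mul _
    have i3 : Integrable (fun ω => X p ω * X p' ω - q p * X p' ω) ℙ :=
      (hXXint p p').sub i1
    have i4 : Integrable
        (fun ω => X p ω * X p' ω - q p * X p' ω - q p' * X p ω) ℙ := i3.sub i2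
    rw [integral_add i4 (integrable_const _), integral_sub i3 i2,
      integral_sub (hXXint p p') i1,
      integral_const_mul, integral_const_mul, hEX p, hEX p', integral_const]
    simp only [measureReal_def, measure_univ, ENNReal.toReal_one, smul_eq_mul, one_mul]
    by_cases hpp' : p = p'
    · subst hpp'; rw [hEXXself p, if_pos rfl]; ring
    · rw [hEXX p p' hpp', if_neg hpp']; ring
  -- the sums
  set a : Fin n → Fin n → ℝ := fun i j => u i * N i j / q (i, j) with hadef
  set S : Fin n → Ω → ℝ := fun j ω => ∑ i, a i j * Y (i, j) ω with hSdef
  set f : Ω → ℝ := fun ω => ∑ j, (S j ω) ^ 2 with hfdef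
  have hfnonneg : ∀ ω, 0 ≤ f ω := fun ω =>
    Finset.sum_nonneg fun j _ => sq_nonneg _
  -- rewrite the event's inner expression
  have hinner : ∀ (j : Fin n) (ω : Ω),
      (∑ i, u i * (X (i, j) ω * N i j / qhat i j)) - ∑ i, u i * N i j
        = S j ω := by
    intro j ω
    rw [hSdef, ← Finset.sum_sub_distrib]
    refine Finset.sum_congr rfl fun i _ => ?_
    have hqi : qhat i j ≠ 0 := (hq0 i j).ne'
    simp only [hadef, hYdef, hqdef]
    field_simp
  -- square expansion integrability
  have hSsq_eq : ∀ j, (fun ω => (S j ω) ^ 2)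
      = fun ω => ∑ i, ∑ i', (a i j * a i' j) * (Y (i, j) ω * Y (i', j) ω) := by
    intro j
    funext ω
    rw [sq, hSdef, Finset.sum_mul_sum]
    refine Finset.sum_congr rfl fun i _ => Finset.sum_congr rfl fun i' _ => ?_
    ring
  have hSsqint : ∀ j, Integrable (fun ω => (S j ω) ^ 2) ℙ := by
    intro j
    rw [hSsq_eq j]
    exact integrable_finset_sum _ fun i _ => integrable_finset_sum _
      fun i' _ => (hYYint (i, j) (i', j)).const_mul _
  have hfint : Integrable f ℙ := integrable_finset_sum _ fun j _ => hSsqint j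
  -- expectation of f
  have hEf : ∫ ω, f ω = ∑ j, ∑ i, (a i j) ^ 2 * (q (i, j) * (1 - q (i, j))) := by
    rw [hfdef, integral_finset_sum _ fun j _ => hSsqint j]
    refine Finset.sum_congr rfl fun j _ => ?_
    rw [hSsq_eq j, integral_finset_sum _ fun i _ => integrable_finset_sum _
      fun i' _ => (hYYint (i, j) (i', j)).const_mul _]
    refine Finset.sum_congr rfl fun i _ => ?_
    rw [integral_finset_sum _ fun i' _ => (hYYint (i, j) (i', j)).const_mul _]
    rw [Finset.sum_eq_single i]
    · rw [integral_const_mul, hEYY (i, j) (i, j), if_pos rfl]; ring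
    · intro i' _ hii'
      rw [integral_const_mul, hEYY (i, j) (i', j),
        if_neg (by simp [Prod.ext_iff, Ne.symm hii']), mul_zero]
    · intro h; exact absurd (Finset.mem_univ i) h
  -- bound the expectation
  have hEfle : ∫ ω, f ω ≤ K * ∑ j, ∑ i, N i j ^ 2 := by
    rw [hEf, Finset.mul_sum]
    refine Finset.sum_le_sum fun j _ => ?_
    rw [Finset.mul_sum]
    refine Finset.sum_le_sum fun i _ => ?_
    have hqij : 0 < qhat i j := hq0 i j
    have hqij1 : qhat i j ≤ 1 := hq1 i j
    have hubij := hub i j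
    have haeq : (a i j) ^ 2 * (q (i, j) * (1 - q (i, j)))
        = (u i) ^ 2 * N i j ^ 2 * (1 - qhat i j) / qhat i j := by
      simp only [hadef, hqdef]
      field_simp
    rw [haeq, div_le_iff₀ hqij]
    nlinarith [sq_nonneg (N i j), sq_nonneg (u i),
      mul_nonneg (sq_nonneg (u i)) (sq_nonneg (N i j)),
      mul_nonneg (mul_nonneg (sq_nonneg (u i)) (sq_nonneg (N i j))) hqij.le,
      mul_le_mul_of_nonneg_right hubij (sq_nonneg (N i j))]
  -- Frobenius norm facts
  set F : ℝ := frobNorm N with hF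
  have hFnn : 0 ≤ F := Real.sqrt_nonneg _
  have hFsq : F ^ 2 = ∑ i, ∑ j, N i j ^ 2 := by
    rw [hF, frobNorm, Real.sq_sqrt]
    exact Finset.sum_nonneg fun i _ => Finset.sum_nonneg fun j _ => sq_nonneg _
  -- rewrite the event
  have hset : {ω | δ * F <
        Real.sqrt (∑ j, ((∑ i, u i * (X (i, j) ω * N i j / qhat i j))
          - ∑ i, u i * N i j) ^ 2)}
      = {ω | (δ * F) ^ 2 < f ω} := by
    ext ω
    simp only [Set.mem_setOf_eq]
    have : (∑ j, ((∑ i, u i * (X (i, j) ω * N i j / qhat i j))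
        - ∑ i, u i * N i j) ^ 2) = f ω := by
      refine Finset.sum_congr rfl fun j _ => ?_
      rw [hinner j ω]
    rw [this, Real.lt_sqrt (by positivity)]
  rw [hset]
  by_cases hF0 : F = 0
  · -- N = 0, so f = 0 and the event is empty
    have hNzero : ∀ i j, N i j = 0 := by
      intro i j
      have h0 : (∑ i, ∑ j, N i j ^ 2) = 0 := by rw [← hFsq, hF0]; ring
      have := (Finset.sum_eq_zero_iff_of_nonneg (fun i _ =>
        Finset.sum_nonneg fun j _ => sq_nonneg _)).mp h0 i (Finset.mem_univ i)
      have := (Finset.sum_eq_zero_iff_of_nonneg (fun j _ => sq_nonneg _)).mp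
        this j (Finset.mem_univ j)
      exact pow_eq_zero_iff (n := 2) (by norm_num) |>.mp this
    have hfz : ∀ ω, f ω = 0 := by
      intro ω
      refine Finset.sum_eq_zero fun j _ => ?_
      have : S j ω = 0 := Finset.sum_eq_zero fun i _ => by
        simp [hadef, hNzero i j]
      rw [this]; ring
    have : {ω | (δ * F) ^ 2 < f ω} = ∅ := by
      ext ω; simp [hfz ω, hF0]
    rw [this]
    simp
  · have hFpos : 0 < F := lt_of_le_of_ne hFnn (Ne.symm hF0)
    have hεpos : 0 < (δ * F) ^ 2 := by positivity
    -- Markov inequality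
    have hfm : Measurable f := by
      refine Finset.measurable_sum _ fun j _ => ?_
      exact (Finset.measurable_sum _ fun i _ =>
        (hYmeas (i, j)).const_mul _).pow_const 2
    have hmarkov : ℙ {ω | (δ * F) ^ 2 < f ω}
        ≤ ENNReal.ofReal (∫ ω, f ω) / ENNReal.ofReal ((δ * F) ^ 2) := by
      have hsub : {ω | (δ * F) ^ 2 < f ω}
          ⊆ {ω | ENNReal.ofReal ((δ * F) ^ 2) ≤ ENNReal.ofReal (f ω)} := by
        intro ω hω
        exact ENNReal.ofReal_le_ofReal (le_of_lt hω)
      calc ℙ {ω | (δ * F) ^ 2 < f ω}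
          ≤ ℙ {ω | ENNReal.ofReal ((δ * F) ^ 2) ≤ ENNReal.ofReal (f ω)} :=
            measure_mono hsub
        _ ≤ (∫⁻ ω, ENNReal.ofReal (f ω) ∂ℙ) / ENNReal.ofReal ((δ * F) ^ 2) :=
            meas_ge_le_lintegral_div
              (ENNReal.measurable_ofReal.comp hfm).aemeasurable
              (by simp [ENNReal.ofReal_eq_zero, not_le, hεpos, hδ.ne', hF0])
              ENNReal.ofReal_ne_top
        _ = ENNReal.ofReal (∫ ω, f ω) / ENNReal.ofReal ((δ * F) ^ 2) := by
            rw [← ofReal_integral_eq_lintegral_ofReal hfint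
              (ae_of_all _ hfnonneg)]
    refine le_trans hmarkov ?_
    have hsum_comm : ∑ j, ∑ i, (N i j) ^ 2 = ∑ i, ∑ j, N i j ^ 2 :=
      Finset.sum_comm
    have hEfle' : ∫ ω, f ω ≤ K * F ^ 2 := by
      rw [hFsq, ← hsum_comm]; exact hEfle
    calc ENNReal.ofReal (∫ ω, f ω) / ENNReal.ofReal ((δ * F) ^ 2)
        ≤ ENNReal.ofReal (K * F ^ 2) / ENNReal.ofReal ((δ * F) ^ 2) :=
          ENNReal.div_le_div_right (ENNReal.ofReal_le_ofReal hEfle') _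
      _ = ENNReal.ofReal (K * F ^ 2 / (δ * F) ^ 2) :=
          (ENNReal.ofReal_div_of_pos hεpos).symm
      _ = ENNReal.ofReal (4 * n * c1 ^ 2 / (m * δ ^ 2)) := by
          congr 1
          rw [hKdef]
          field_simp
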